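/- Let m ≥ 1 and let V : ℂ^m → ℂ^m be a linear map with ‖Vx‖ ≤ ‖x‖ for all x ∈ ℂ^m. If a, b ∈ ℂ^m satisfy (V − I)a + i(V + I)b = 0, then Im⟨a, b⟩ ≥ 0. -/

import Mathlib

/-- if `V` is a linear contraction of `ℂ^m` and
`(V − I)a + i(V + I)b = 0`, then `Im⟨a, b⟩ ≥ 0`, where
`⟨a,b⟩ = Σ_k a_k·conj(b_k)`. -/
theorem stmt9 (m : ℕ) (hm : 1 ≤ m)
    (V : EuclideanSpace ℂ (Fin m) →ₗ[ℂ] EuclideanSpace ℂ (Fin m))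
    (hV : ∀ x, ‖V x‖ ≤ ‖x‖)
    (a b : EuclideanSpace ℂ (Fin m))
    (hab : (V a - a) + Complex.I • (V b + b) = 0) :
    0 ≤ (∑ k, a k * (starRingEnd ℂ) (b k)).im := by
  set u : EuclideanSpace ℂ (Fin m) := a + Complex.I • b with hu
  set v : EuclideanSpace ℂ (Fin m) := a - Complex.I • b with hv
  have h1 : V u - v = (V a - a) + Complex.I • (V b + b) := by
    simp only [hu, hv, map_add, map_smul, smul_add]
    abel
  have hVu : V u = v := by
    rw [← sub_eq_zero, h1, hab]
  have h2 : ‖v‖ ≤ ‖u‖ := hVu ▸ hV u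
  have h2' : (‖v‖ : ℝ) ^ 2 ≤ ‖u‖ ^ 2 := by nlinarith [norm_nonneg v, norm_nonneg u]
  have h4 : (inner ℂ u u : ℂ) - inner ℂ v v =
      2 * Complex.I * (inner ℂ a b : ℂ) - 2 * Complex.I * (inner ℂ b a : ℂ) := by
    simp only [hu, hv, inner_add_left, inner_add_right, inner_sub_left, inner_sub_right,
      inner_smul_left, inner_smul_right, Complex.conj_I]
    ring
  have h5 : (inner ℂ u u : ℂ) = (‖u‖ : ℂ) ^ 2 := inner_self_eq_norm_sq_to_K u
  have h6 : (inner ℂ v v : ℂ) = (‖v‖ : ℂ) ^ 2 := inner_self_eq_norm_sq_to_K v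
  have hconj : (inner ℂ a b : ℂ) = (starRingEnd ℂ) (inner ℂ b a : ℂ) := (inner_conj_symm a b).symm
  rw [h5, h6, hconj] at h4
  set z : ℂ := inner ℂ b a with hz
  have h7 := congrArg Complex.re h4
  simp [Complex.sub_re, Complex.mul_re, Complex.mul_im, Complex.conj_re, Complex.conj_im,
    Complex.I_re, Complex.I_im, ← Complex.ofReal_pow] at h7
  have hsum : (∑ k, a k * (starRingEnd ℂ) (b k)) = (inner ℂ b a : ℂ) := by
    simp [PiLp.inner_apply, mul_comm]
  rw [hsum]
  nlinarith [h7, h2']
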